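/- arXiv:2411.03712 — 2 statements merged into one kernel-verified Lean document; each statement's English description precedes it below -/
import Mathlib

section
/- Let t > 0, K, a ∈ ℝ and define ℓ(s) = e^{Ks}(cos(πs/(2t)) + a·sin(πs/t)) for s ∈ [0,t]. Then ∫₀ᵗ (ℓ'(s))²·e^{-2Ks} ds = (K/2)(Kt(1+a²) + 16Kta/(3π)) - K + π²a²/(2t) + π²/(8t) + 2πa/(3t). -/
open Real intervalIntegral

set_option maxHeartbeats 1000000

theorem ell_deriv_square_weighted_integral (t K a : ℝ) (ht : 0 < t)
    (ℓ : ℝ → ℝ)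
    (hℓ : ∀ s, ℓ s = Real.exp (K * s) *
      (Real.cos (π * s / (2 * t)) + a * Real.sin (π * s / t))) :
    (∫ s in (0:ℝ)..t, (deriv ℓ s) ^ 2 * Real.exp (-2 * K * s))
      = (K / 2) * (K * t * (1 + a ^ 2) + 16 * K * t * a / (3 * π)) - K
        + π ^ 2 * a ^ 2 / (2 * t) + π ^ 2 / (8 * t) + 2 * π * a / (3 * t) := by
  have ht' : t ≠ 0 := ne_of_gt ht
  have hπ : (π : ℝ) ≠ 0 := Real.pi_ne_zero
  have hℓfun : ℓ = fun s => Real.exp (K * s) *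
      (Real.cos (π * s / (2 * t)) + a * Real.sin (π * s / t)) := funext hℓ
  -- derivative of ℓ
  have hderiv : ∀ s : ℝ, deriv ℓ s = Real.exp (K * s) *
      (K * (Real.cos (π * s / (2 * t)) + a * Real.sin (π * s / t))
        + (-(π / (2 * t)) * Real.sin (π * s / (2 * t))
            + a * (π / t) * Real.cos (π * s / t))) := by
    intro s
    have h1 : HasDerivAt (fun s : ℝ => K * s) K s := by
      simpa using (hasDerivAt_id s).const_mul K
    have hexp : HasDerivAt (fun s : ℝ => Real.exp (K * s)) (Real.exp (K * s) * K) s := h1.exp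
    have h2 : HasDerivAt (fun s : ℝ => π * s / (2 * t)) (π * 1 / (2 * t)) s :=
      ((hasDerivAt_id s).const_mul π).div_const (2 * t)
    have h3 : HasDerivAt (fun s : ℝ => π * s / t) (π * 1 / t) s :=
      ((hasDerivAt_id s).const_mul π).div_const t
    have H := hexp.mul (h2.cos.add (h3.sin.const_mul a))
    rw [hℓfun, HasDerivAt.deriv (f := fun s => Real.exp (K * s) *
        (Real.cos (π * s / (2 * t)) + a * Real.sin (π * s / t))) H]
    simp only [Pi.add_apply]
    ring
  -- the integrand with the exponential cancelled
  have hint : ∀ s : ℝ, (deriv ℓ s) ^ 2 * Real.exp (-2 * K * s)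
      = (K * (Real.cos (π * s / (2 * t)) + a * Real.sin (π * s / t))
        + (-(π / (2 * t)) * Real.sin (π * s / (2 * t))
            + a * (π / t) * Real.cos (π * s / t))) ^ 2 := by
    intro s
    rw [hderiv s]
    have he : Real.exp (K * s) ^ 2 * Real.exp (-2 * K * s) = 1 := by
      rw [sq, ← Real.exp_add, ← Real.exp_add, show K * s + K * s + -2 * K * s = 0 by ring,
        Real.exp_zero]
    calc (Real.exp (K * s) *
          (K * (Real.cos (π * s / (2 * t)) + a * Real.sin (π * s / t))
            + (-(π / (2 * t)) * Real.sin (π * s / (2 * t))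
                + a * (π / t) * Real.cos (π * s / t)))) ^ 2 * Real.exp (-2 * K * s)
        = (Real.exp (K * s) ^ 2 * Real.exp (-2 * K * s)) *
          (K * (Real.cos (π * s / (2 * t)) + a * Real.sin (π * s / t))
            + (-(π / (2 * t)) * Real.sin (π * s / (2 * t))
                + a * (π / t) * Real.cos (π * s / t))) ^ 2 := by ring
      _ = _ := by rw [he]; ring
  rw [intervalIntegral.integral_congr
    (g := fun s => (K * (Real.cos (π * s / (2 * t)) + a * Real.sin (π * s / t))
        + (-(π / (2 * t)) * Real.sin (π * s / (2 * t))
            + a * (π / t) * Real.cos (π * s / t))) ^ 2)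
    (fun s _ => hint s)]
  -- antiderivative
  set F : ℝ → ℝ := fun s =>
    (K ^ 2 * (1 + a ^ 2) / 2 + (π / (2 * t)) ^ 2 * (1 / 2 + 2 * a ^ 2)) * s
    + (-((K ^ 2 * a + 2 * a * (π / (2 * t)) ^ 2) * (2 * t / π))) * Real.cos (π * s / (2 * t))
    + (K * a) * Real.sin (π * s / (2 * t))
    + (K / 2) * Real.cos (2 * (π * s / (2 * t)))
    + ((K ^ 2 - (π / (2 * t)) ^ 2) * (t / (2 * π))) * Real.sin (2 * (π * s / (2 * t)))
    + (-(a * (K ^ 2 - 2 * (π / (2 * t)) ^ 2) * (2 * t / (3 * π)))) * Real.cos (3 * (π * s / (2 * t)))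
    + (K * a) * Real.sin (3 * (π * s / (2 * t)))
    + (-(K * a ^ 2 / 2)) * Real.cos (4 * (π * s / (2 * t)))
    + (a ^ 2 * (2 * (π / (2 * t)) ^ 2 - K ^ 2 / 2) * (t / (2 * π))) * Real.sin (4 * (π * s / (2 * t)))
    with hFdef
  have hF : ∀ s ∈ Set.uIcc (0:ℝ) t, HasDerivAt F
      ((K * (Real.cos (π * s / (2 * t)) + a * Real.sin (π * s / t))
        + (-(π / (2 * t)) * Real.sin (π * s / (2 * t))
            + a * (π / t) * Real.cos (π * s / t))) ^ 2) s := by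
    intro s _
    have harg : HasDerivAt (fun s : ℝ => π * s / (2 * t)) (π * 1 / (2 * t)) s :=
      ((hasDerivAt_id s).const_mul π).div_const (2 * t)
    have harg2 := harg.const_mul (2 : ℝ)
    have harg3 := harg.const_mul (3 : ℝ)
    have harg4 := harg.const_mul (4 : ℝ)
    have H := ((((((((((hasDerivAt_id s).const_mul
        (K ^ 2 * (1 + a ^ 2) / 2 + (π / (2 * t)) ^ 2 * (1 / 2 + 2 * a ^ 2))).add
      (harg.cos.const_mul (-((K ^ 2 * a + 2 * a * (π / (2 * t)) ^ 2) * (2 * t / π))))).add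
      (harg.sin.const_mul (K * a))).add
      (harg2.cos.const_mul (K / 2))).add
      (harg2.sin.const_mul ((K ^ 2 - (π / (2 * t)) ^ 2) * (t / (2 * π))))).add
      (harg3.cos.const_mul (-(a * (K ^ 2 - 2 * (π / (2 * t)) ^ 2) * (2 * t / (3 * π)))))).add
      (harg3.sin.const_mul (K * a))).add
      (harg4.cos.const_mul (-(K * a ^ 2 / 2)))).add
      (harg4.sin.const_mul (a ^ 2 * (2 * (π / (2 * t)) ^ 2 - K ^ 2 / 2) * (t / (2 * π)))))
    have hE : (K ^ 2 * (1 + a ^ 2) / 2 + (π / (2 * t)) ^ 2 * (1 / 2 + 2 * a ^ 2))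
        + (K ^ 2 * a + 2 * a * (π / (2 * t)) ^ 2) * Real.sin (π * s / (2 * t))
        + K * a * (π / (2 * t)) * Real.cos (π * s / (2 * t))
        + (-(K * (π / (2 * t)))) * Real.sin (2 * (π * s / (2 * t)))
        + ((K ^ 2 - (π / (2 * t)) ^ 2) / 2) * Real.cos (2 * (π * s / (2 * t)))
        + a * (K ^ 2 - 2 * (π / (2 * t)) ^ 2) * Real.sin (3 * (π * s / (2 * t)))
        + 3 * K * a * (π / (2 * t)) * Real.cos (3 * (π * s / (2 * t)))
        + 2 * K * a ^ 2 * (π / (2 * t)) * Real.sin (4 * (π * s / (2 * t)))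
        + a ^ 2 * (2 * (π / (2 * t)) ^ 2 - K ^ 2 / 2) * Real.cos (4 * (π * s / (2 * t)))
        = (K * (Real.cos (π * s / (2 * t)) + a * Real.sin (π * s / t))
          + (-(π / (2 * t)) * Real.sin (π * s / (2 * t))
              + a * (π / t) * Real.cos (π * s / t))) ^ 2 := by
      rw [show π * s / t = 2 * (π * s / (2 * t)) by field_simp,
          show π / t = 2 * (π / (2 * t)) by field_simp]
      rw [show (3:ℝ) * (π * s / (2 * t)) = 2 * (π * s / (2 * t)) + π * s / (2 * t) by ring,
          show (4:ℝ) * (π * s / (2 * t)) = 2 * (2 * (π * s / (2 * t))) by ring]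
      simp only [Real.cos_add, Real.sin_add, Real.cos_two_mul, Real.sin_two_mul]
      linear_combination (-((π / (2 * t)) ^ 2
          + 2 * K * a * (π / (2 * t)) * Real.cos (π * s / (2 * t))
          + 4 * K ^ 2 * a ^ 2 * Real.cos (π * s / (2 * t)) ^ 2))
        * Real.sin_sq_add_cos_sq (π * s / (2 * t))
    rw [← hE]
    refine H.congr_deriv ?_
    field_simp
    ring
  have hcont : IntervalIntegrable (fun s =>
      (K * (Real.cos (π * s / (2 * t)) + a * Real.sin (π * s / t))
        + (-(π / (2 * t)) * Real.sin (π * s / (2 * t))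
            + a * (π / t) * Real.cos (π * s / t))) ^ 2) MeasureTheory.volume 0 t := by
    apply Continuous.intervalIntegrable
    fun_prop
  rw [intervalIntegral.integral_eq_sub_of_hasDerivAt hF hcont]
  rw [hFdef]
  simp only
  rw [show π * t / (2 * t) = π / 2 by field_simp]
  rw [show (2:ℝ) * (π / 2) = π by ring, show (3:ℝ) * (π / 2) = π + π / 2 by ring,
      show (4:ℝ) * (π / 2) = 2 * π by ring]
  simp only [mul_zero, zero_mul, zero_div, Real.cos_zero, Real.sin_zero,
    Real.cos_pi_div_two, Real.sin_pi_div_two, Real.cos_pi, Real.sin_pi,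
    Real.cos_add, Real.sin_add, Real.cos_two_pi, Real.sin_two_pi]
  field_simp
  ring
end

section
/- Let t > 0, K ≠ 0, α > 1 and define ℓ(s) = (∫₀^{t-s} e^{Kr/(α-1)} dr)/(∫₀^t e^{Kr/(α-1)} dr) for s ∈ [0,t]. Then ∫₀ᵗ e^{2Ks/(α-1)}·(ℓ'(s) + (K/(α-1))ℓ(s))² ds = (K/(2(α-1)))·coth(Kt/(2(α-1))). -/
open Real intervalIntegral

noncomputable def coth (x : ℝ) : ℝ := Real.cosh x / Real.sinh x

theorem exp_weighted_deriv_combination_integral (t K α : ℝ) (ht : 0 < t)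
    (hK : K ≠ 0) (hα : 1 < α)
    (ℓ : ℝ → ℝ)
    (hℓ : ∀ s, ℓ s = (∫ r in (0:ℝ)..(t - s), Real.exp (K * r / (α - 1)))
        / (∫ r in (0:ℝ)..t, Real.exp (K * r / (α - 1)))) :
    (∫ s in (0:ℝ)..t, Real.exp (2 * K * s / (α - 1))
        * (deriv ℓ s + (K / (α - 1)) * ℓ s) ^ 2)
      = (K / (2 * (α - 1))) * coth (K * t / (2 * (α - 1))) := by
  have hα1 : α - 1 ≠ 0 := by linarith
  set c := K / (α - 1) with hc_def
  have hc : c ≠ 0 := div_ne_zero hK hα1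
  have hct : c * t ≠ 0 := mul_ne_zero hc ht.ne'
  have hE1 : Real.exp (c * t) - 1 ≠ 0 := by
    intro h
    have h1 : Real.exp (c * t) = Real.exp 0 := by rw [Real.exp_zero]; linarith
    exact hct (Real.exp_injective h1)
  -- generic integral formula
  have hint2 : ∀ (a : ℝ), a ≠ 0 → ∀ x : ℝ,
      (∫ r in (0:ℝ)..x, Real.exp (a * r)) = (Real.exp (a * x) - 1) / a := by
    intro a ha x
    have h2 : ∀ y ∈ Set.uIcc (0:ℝ) x,
        HasDerivAt (fun r => Real.exp (a * r) / a) (Real.exp (a * y)) y := by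
      intro y _
      have := (((hasDerivAt_id y).const_mul a).exp).div_const a
      simpa [mul_comm, mul_div_assoc, mul_div_cancel_left₀ _ ha] using this
    rw [intervalIntegral.integral_eq_sub_of_hasDerivAt h2 (by
      apply Continuous.intervalIntegrable; continuity)]
    simp [sub_div]
  have hint : ∀ x : ℝ, (∫ r in (0:ℝ)..x, Real.exp (K * r / (α - 1)))
      = (Real.exp (c * x) - 1) / c := by
    intro x
    have h1 : ∀ r : ℝ, K * r / (α - 1) = c * r := fun r => by
      rw [hc_def]; ring
    simp_rw [h1]
    exact hint2 c hc x
  have hℓ' : ∀ s, ℓ s = (Real.exp (c * (t - s)) - 1) / (Real.exp (c * t) - 1) := by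
    intro s
    rw [hℓ, hint, hint]
    field_simp
  have hderiv : ∀ s, deriv ℓ s
      = Real.exp (c * (t - s)) * (-c) / (Real.exp (c * t) - 1) := by
    intro s
    have h1 : HasDerivAt (fun s : ℝ => c * (t - s)) (-c) s := by
      simpa using ((hasDerivAt_id s).const_sub t).const_mul c
    have h2 := ((h1.exp).sub_const 1).div_const (Real.exp (c * t) - 1)
    have h3 : ℓ = fun s => (Real.exp (c * (t - s)) - 1) / (Real.exp (c * t) - 1) :=
      funext hℓ'
    rw [h3]
    exact h2.deriv
  have hfun : ∀ s, Real.exp (2 * K * s / (α - 1))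
      * (deriv ℓ s + (K / (α - 1)) * ℓ s) ^ 2
      = Real.exp (2 * c * s) * (c ^ 2 / (Real.exp (c * t) - 1) ^ 2) := by
    intro s
    rw [hderiv, hℓ', ← hc_def]
    have h1 : 2 * K * s / (α - 1) = 2 * c * s := by rw [hc_def]; ring
    rw [h1]
    congr 1
    field_simp
    ring
  have hmain : (∫ s in (0:ℝ)..t, Real.exp (2 * K * s / (α - 1))
      * (deriv ℓ s + (K / (α - 1)) * ℓ s) ^ 2)
      = (Real.exp (c * t) ^ 2 - 1) / (2 * c)
        * (c ^ 2 / (Real.exp (c * t) - 1) ^ 2) := by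
    simp_rw [hfun]
    rw [intervalIntegral.integral_mul_const, hint2 (2 * c) (mul_ne_zero two_ne_zero hc) t,
      show 2 * c * t = c * t + c * t by ring, Real.exp_add, ← sq]
  rw [hmain]
  -- now the right-hand side
  have hx : K * t / (2 * (α - 1)) = c * t / 2 := by rw [hc_def]; field_simp
  have hK2 : K / (2 * (α - 1)) = c / 2 := by rw [hc_def, div_div, mul_comm (α - 1) 2]
  rw [hx, hK2, coth, Real.cosh_eq, Real.sinh_eq]
  have hsinh : Real.exp (c * t / 2) - Real.exp (-(c * t / 2)) ≠ 0 := by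
    intro h
    have h2 : Real.sinh (c * t / 2) = 0 := by rw [Real.sinh_eq]; rw [h]; simp
    have := Real.sinh_eq_zero.mp h2
    exact hct (by linarith)
  have he : Real.exp (c * t) = Real.exp (c * t / 2) * Real.exp (c * t / 2) := by
    rw [← Real.exp_add]; ring_nf
  have hemul : Real.exp (c * t / 2) * Real.exp (c * t / 2) - 1 ≠ 0 := by
    rw [← he]; exact hE1
  rw [Real.exp_neg] at hsinh ⊢
  have hepos : Real.exp (c * t / 2) ≠ 0 := (Real.exp_pos _).ne'
  rw [he] at hE1 ⊢
  generalize Real.exp (c * t / 2) = x at *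
  have h2 : x ^ 2 - 1 ≠ 0 := by rw [sq]; exact hE1
  field_simp
  ring
end
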